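/- The map f̌_a restricted to ℝ × (0, c_a) is injective: if f̌_a(α,β) = f̌_a(α',β') with β, β' ∈ (0, c_a), then α = α' and β = β'. -/

import Mathlib

open Real

noncomputable def xi (a t : ℝ) : ℝ :=
  2 / Real.sqrt (2 * Real.cos (4 * t) + (a ^ 4 + (a ^ 4)⁻¹))

noncomputable def tau (a s : ℝ) : ℝ := ∫ t in (0:ℝ)..s, xi a t

noncomputable def gam (a : ℝ) (s : ℝ) : ℝ × ℝ × ℝ :=
  (tau a s,
   ∫ t in (0:ℝ)..s, -(xi a t * Real.cos t),
   ∫ t in (0:ℝ)..s, -(xi a t * Real.sin t))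

noncomputable def gamTilde (a : ℝ) (x : ℝ) : ℝ × ℝ × ℝ :=
  gam a (Function.invFun (tau a) x)

noncomputable def fcheck (a : ℝ) (α β : ℝ) : ℝ × ℝ × ℝ :=
  (1/2 : ℝ) • (gamTilde a (α + β) + gamTilde a (α - β))

namespace Stmt17

open MeasureTheory intervalIntegral Filter

variable {a : ℝ}

lemma arg_pos (ha : a ∈ Set.Ioo (0:ℝ) 1) (t : ℝ) :
    0 < 2 * Real.cos (4 * t) + (a ^ 4 + (a ^ 4)⁻¹) := by
  obtain ⟨ha0, ha1⟩ := ha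
  set x := a ^ 4 with hx
  have hx0 : 0 < x := by positivity
  have hx1 : x < 1 := by
    have := pow_lt_one₀ (le_of_lt ha0) ha1 (by norm_num : 4 ≠ 0)
    simpa [hx] using this
  have key : 2 < x + x⁻¹ := by
    have hne : x - 1 ≠ 0 := sub_ne_zero.mpr hx1.ne
    have h1 : 0 < (x - 1) ^ 2 := (sq_nonneg (x - 1)).lt_of_ne (Ne.symm (pow_ne_zero _ hne))
    have h2 : x + x⁻¹ - 2 = (x - 1) ^ 2 / x := by field_simp; ring
    nlinarith [div_pos h1 hx0]
  have hc := Real.neg_one_le_cos (4 * t)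
  linarith

lemma xi_pos (ha : a ∈ Set.Ioo (0:ℝ) 1) (t : ℝ) : 0 < xi a t :=
  div_pos two_pos (Real.sqrt_pos.mpr (arg_pos ha t))

lemma xi_cont (ha : a ∈ Set.Ioo (0:ℝ) 1) : Continuous (xi a) := by
  apply continuous_const.div
  · exact (Real.continuous_sqrt.comp (by continuity))
  · intro t
    exact (Real.sqrt_pos.mpr (arg_pos ha t)).ne'

lemma xi_intg (ha : a ∈ Set.Ioo (0:ℝ) 1) (s s' : ℝ) :
    IntervalIntegrable (xi a) MeasureTheory.volume s s' :=
  (xi_cont ha).intervalIntegrable s s'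

lemma xic_cont (ha : a ∈ Set.Ioo (0:ℝ) 1) : Continuous (fun t => xi a t * Real.cos t) :=
  (xi_cont ha).mul Real.continuous_cos

lemma xis_cont (ha : a ∈ Set.Ioo (0:ℝ) 1) : Continuous (fun t => xi a t * Real.sin t) :=
  (xi_cont ha).mul Real.continuous_sin

lemma tau_sub (ha : a ∈ Set.Ioo (0:ℝ) 1) (s s' : ℝ) :
    tau a s' = tau a s + ∫ t in s..s', xi a t := by
  rw [tau, tau, ← integral_add_adjacent_intervals (xi_intg ha 0 s) (xi_intg ha s s')]

lemma tau_strictMono (ha : a ∈ Set.Ioo (0:ℝ) 1) : StrictMono (tau a) := by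
  intro s s' h
  rw [tau_sub ha s s']
  have := intervalIntegral_pos_of_pos (xi_intg ha s s') (xi_pos ha) h
  linarith

lemma tau_cont (ha : a ∈ Set.Ioo (0:ℝ) 1) : Continuous (tau a) := by
  rw [continuous_iff_continuousAt]
  intro s
  exact (((xi_cont ha).integral_hasStrictDerivAt 0 s).hasDerivAt).continuousAt

lemma xi_periodic : Function.Periodic (xi a) π := by
  intro t
  have h : 4 * (t + π) = 4 * t + 2 * π + 2 * π := by ring
  simp [xi, h, Real.cos_add_two_pi]

lemma tau_add_pi (ha : a ∈ Set.Ioo (0:ℝ) 1) (s : ℝ) :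
    tau a (s + π) = tau a s + tau a π := by
  rw [tau_sub ha s (s + π)]
  congr 1
  have := (xi_periodic (a := a)).intervalIntegral_add_eq s 0
  simpa [tau] using this

lemma tau_pi_pos (ha : a ∈ Set.Ioo (0:ℝ) 1) : 0 < tau a π := by
  have := intervalIntegral_pos_of_pos (xi_intg ha 0 π) (xi_pos ha) Real.pi_pos
  simpa [tau] using this

lemma xi_lb (ha : a ∈ Set.Ioo (0:ℝ) 1) (t : ℝ) :
    2 / Real.sqrt (2 + (a ^ 4 + (a ^ 4)⁻¹)) ≤ xi a t := by
  rw [xi]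
  gcongr
  · exact Real.sqrt_pos.mpr (arg_pos ha t)
  · linarith [Real.cos_le_one (4 * t)]

lemma tau_surj (ha : a ∈ Set.Ioo (0:ℝ) 1) : Function.Surjective (tau a) := by
  have h2K : (0:ℝ) < 2 + (a ^ 4 + (a ^ 4)⁻¹) := by
    have h4 : (0:ℝ) < a ^ 4 := by
      have := ha.1; positivity
    positivity
  obtain ⟨ε, hε0, hεlb⟩ : ∃ ε : ℝ, 0 < ε ∧ ∀ t, ε ≤ xi a t :=
    ⟨_, div_pos two_pos (Real.sqrt_pos.mpr h2K), xi_lb ha⟩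
  have hub : ∀ s, 0 ≤ s → ε * s ≤ tau a s := by
    intro s hs
    have h := intervalIntegral.integral_mono_on hs (_root_.intervalIntegrable_const (c := ε))
      (xi_intg ha 0 s) (fun t _ => hεlb t)
    rw [intervalIntegral.integral_const, smul_eq_mul] at h
    rw [tau]
    nlinarith
  have hlb : ∀ s, s ≤ 0 → tau a s ≤ ε * s := by
    intro s hs
    have h := intervalIntegral.integral_mono_on hs (_root_.intervalIntegrable_const (c := ε))
      (xi_intg ha s 0) (fun t _ => hεlb t)
    have h2 : ∫ t in s..(0:ℝ), xi a t = - tau a s := by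
      rw [tau, intervalIntegral.integral_symm]
    rw [h2, intervalIntegral.integral_const, smul_eq_mul] at h
    nlinarith
  apply (tau_cont ha).surjective
  · apply tendsto_atTop_mono' atTop (f₁ := fun s => ε * s)
    · filter_upwards [eventually_ge_atTop (0:ℝ)] with s hs using hub s hs
    · exact (tendsto_id.const_mul_atTop hε0)
  · apply tendsto_atBot_mono' atBot (f₁ := fun s => ε * s)
    · filter_upwards [eventually_le_atBot (0:ℝ)] with s hs using hlb s hs
    · exact (tendsto_id.const_mul_atBot hε0)

lemma tau_rightInv (ha : a ∈ Set.Ioo (0:ℝ) 1) (x : ℝ) :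
    tau a (Function.invFun (tau a) x) = x :=
  Function.rightInverse_invFun (tau_surj ha) x

/-- The key separation lemma: two "weighted arcs" of the circle within a window of length
less than `2π`, with equal mass, cannot have equal first moments. -/
lemma key (ha : a ∈ Set.Ioo (0:ℝ) 1) {p q r w : ℝ}
    (hpq : p < q) (hqr : q ≤ r) (hrw : r < w) (hw : w < p + 2 * π)
    (hm : (∫ t in p..q, xi a t) = ∫ t in r..w, xi a t)
    (hc : (∫ t in p..q, xi a t * Real.cos t) = ∫ t in r..w, xi a t * Real.cos t)
    (hs : (∫ t in p..q, xi a t * Real.sin t) = ∫ t in r..w, xi a t * Real.sin t) :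
    False := by
  set θ : ℝ := ((q + r) / 2 + ((w + p) / 2 + π)) / 2 with hθ
  set A : ℝ := (((w + p) / 2 + π) - (q + r) / 2) / 2 with hA
  have hθA1 : θ - A = (q + r) / 2 := by rw [hθ, hA]; ring
  have hθA2 : θ + A = (w + p) / 2 + π := by rw [hθ, hA]; ring
  have hA0 : 0 < A := by rw [hA]; linarith
  have hAπ : A ≤ π := by rw [hA]; linarith
  -- pointwise bounds
  have hub : ∀ t ∈ Set.Ioo r w, Real.cos A < Real.cos (t - θ) := by
    intro t ht
    have h1 : θ - A < t := by rw [hθA1]; rcases ht with ⟨h, _⟩; linarith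
    have h2 : t < θ + A := by rw [hθA2]; rcases ht with ⟨_, h⟩; linarith
    have habs : |t - θ| < A := abs_lt.mpr ⟨by linarith, by linarith⟩
    calc Real.cos A < Real.cos |t - θ| :=
          Real.cos_lt_cos_of_nonneg_of_le_pi (abs_nonneg _) hAπ habs
      _ = Real.cos (t - θ) := Real.cos_abs _
  have hlb : ∀ t ∈ Set.Ioo p q, Real.cos (t - θ) < Real.cos A := by
    intro t ht
    rcases ht with ⟨htp, htq⟩
    have h1 : A < θ - t := by
      have : t < θ - A := by rw [hθA1]; linarith
      linarith
    have h2 : θ - t < 2 * π - A := by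
      have : θ + A - 2 * π < t := by rw [hθA2]; linarith
      linarith
    have hcos : Real.cos (θ - t) < Real.cos A := by
      rcases le_or_gt (θ - t) π with hle | hgt
      · exact Real.cos_lt_cos_of_nonneg_of_le_pi hA0.le hle h1
      · have h3 : A < 2 * π - (θ - t) := by linarith
        have h4 : 2 * π - (θ - t) ≤ π := by linarith
        have := Real.cos_lt_cos_of_nonneg_of_le_pi hA0.le h4 h3
        rwa [Real.cos_two_pi_sub] at this
    calc Real.cos (t - θ) = Real.cos (-(θ - t)) := by ring_nf
      _ = Real.cos (θ - t) := Real.cos_neg _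
      _ < Real.cos A := hcos
  -- integrability
  have hint : ∀ (u v : ℝ), IntervalIntegrable (fun t => xi a t * Real.cos (t - θ) - Real.cos A * xi a t) MeasureTheory.volume u v := by
    intro u v
    exact (((xi_cont ha).mul (Real.continuous_cos.comp (continuous_id.sub continuous_const))).sub
      (continuous_const.mul (xi_cont ha))).intervalIntegrable u v
  have hintc : ∀ (u v : ℝ), IntervalIntegrable (fun t => xi a t * Real.cos (t - θ)) MeasureTheory.volume u v := by
    intro u v
    exact ((xi_cont ha).mul (Real.continuous_cos.comp (continuous_id.sub continuous_const))).intervalIntegrable u v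
  -- strict inequalities
  have hI1 : Real.cos A * ∫ t in r..w, xi a t < ∫ t in r..w, xi a t * Real.cos (t - θ) := by
    have hpos := intervalIntegral_pos_of_pos_on (hint r w)
      (fun t ht => by nlinarith [mul_pos (sub_pos.mpr (hub t ht)) (xi_pos ha t)]) hrw
    rw [intervalIntegral.integral_sub (f := fun t => xi a t * Real.cos (t - θ)) (g := fun t => Real.cos A * xi a t) (hintc r w) ((continuous_const.mul (xi_cont ha)).intervalIntegrable r w),
      intervalIntegral.integral_const_mul] at hpos
    linarith
  have hI2 : (∫ t in p..q, xi a t * Real.cos (t - θ)) < Real.cos A * ∫ t in p..q, xi a t := by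
    have hpos := intervalIntegral_pos_of_pos_on (f := fun t => Real.cos A * xi a t - xi a t * Real.cos (t - θ))
      (by exact ((continuous_const.mul (xi_cont ha)).sub
        ((xi_cont ha).mul (Real.continuous_cos.comp (continuous_id.sub continuous_const)))).intervalIntegrable p q)
      (fun t ht => by
        show (0:ℝ) < Real.cos A * xi a t - xi a t * Real.cos (t - θ)
        nlinarith [mul_pos (sub_pos.mpr (hlb t ht)) (xi_pos ha t)]) hpq
    rw [intervalIntegral.integral_sub (f := fun t => Real.cos A * xi a t) (g := fun t => xi a t * Real.cos (t - θ)) ((continuous_const.mul (xi_cont ha)).intervalIntegrable p q) (hintc p q),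
      intervalIntegral.integral_const_mul] at hpos
    linarith
  -- expansion
  have hexp : ∀ (u v : ℝ), (∫ t in u..v, xi a t * Real.cos (t - θ))
      = (∫ t in u..v, xi a t * Real.cos t) * Real.cos θ
        + (∫ t in u..v, xi a t * Real.sin t) * Real.sin θ := by
    intro u v
    rw [← intervalIntegral.integral_mul_const, ← intervalIntegral.integral_mul_const,
      ← intervalIntegral.integral_add (f := fun t => xi a t * Real.cos t * Real.cos θ) (g := fun t => xi a t * Real.sin t * Real.sin θ)
        (((xic_cont ha).mul continuous_const).intervalIntegrable u v)
        (((xis_cont ha).mul continuous_const).intervalIntegrable u v)]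
    congr 1
    ext t
    rw [Real.cos_sub]
    ring
  have heqpq : (∫ t in p..q, xi a t * Real.cos (t - θ)) = ∫ t in r..w, xi a t * Real.cos (t - θ) := by
    rw [hexp, hexp, hc, hs]
  rw [heqpq, hm] at hI2
  linarith

lemma prim_sub (ha : a ∈ Set.Ioo (0:ℝ) 1) {f : ℝ → ℝ} (hf : Continuous f) (u v : ℝ) :
    (∫ t in (0:ℝ)..v, f t) - ∫ t in (0:ℝ)..u, f t = ∫ t in u..v, f t := by
  rw [← integral_add_adjacent_intervals (hf.intervalIntegrable 0 u) (hf.intervalIntegrable u v)]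
  ring

/-- Core injectivity in `β`, for `β < β'`. -/
lemma aux (ha : a ∈ Set.Ioo (0:ℝ) 1) {α β β' : ℝ}
    (hβ0 : 0 < β) (hlt : β < β') (hβ'π : β' < tau a π)
    (h2 : (∫ t in (0:ℝ)..(Function.invFun (tau a) (α + β)), -(xi a t * Real.cos t))
        + (∫ t in (0:ℝ)..(Function.invFun (tau a) (α - β)), -(xi a t * Real.cos t))
        = (∫ t in (0:ℝ)..(Function.invFun (tau a) (α + β')), -(xi a t * Real.cos t))
        + (∫ t in (0:ℝ)..(Function.invFun (tau a) (α - β')), -(xi a t * Real.cos t)))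
    (h3 : (∫ t in (0:ℝ)..(Function.invFun (tau a) (α + β)), -(xi a t * Real.sin t))
        + (∫ t in (0:ℝ)..(Function.invFun (tau a) (α - β)), -(xi a t * Real.sin t))
        = (∫ t in (0:ℝ)..(Function.invFun (tau a) (α + β')), -(xi a t * Real.sin t))
        + (∫ t in (0:ℝ)..(Function.invFun (tau a) (α - β')), -(xi a t * Real.sin t))) :
    False := by
  set σ : ℝ → ℝ := Function.invFun (tau a) with hσ
  have hri : ∀ x, tau a (σ x) = x := fun x => tau_rightInv ha x
  have hmono := tau_strictMono ha
  set p := σ (α - β') with hp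
  set q := σ (α - β) with hq
  set r := σ (α + β) with hr
  set w := σ (α + β') with hwdef
  have hpq : p < q := by
    have : tau a p < tau a q := by rw [hri, hri]; linarith
    exact hmono.lt_iff_lt.mp this
  have hqr : q ≤ r := by
    have : tau a q < tau a r := by rw [hri, hri]; linarith
    exact (hmono.lt_iff_lt.mp this).le
  have hrw : r < w := by
    have : tau a r < tau a w := by rw [hri, hri]; linarith
    exact hmono.lt_iff_lt.mp this
  have hw : w < p + 2 * π := by
    have h1 : tau a (p + 2 * π) = tau a p + 2 * tau a π := by
      have e : p + 2 * π = p + π + π := by ring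
      rw [e, tau_add_pi ha, tau_add_pi ha]; ring
    have : tau a w < tau a (p + 2 * π) := by
      rw [hri, h1, hri]; linarith
    exact hmono.lt_iff_lt.mp this
  -- masses
  have hm : (∫ t in p..q, xi a t) = ∫ t in r..w, xi a t := by
    have e1 : (∫ t in p..q, xi a t) = tau a q - tau a p := by
      rw [tau_sub ha p q]; ring
    have e2 : (∫ t in r..w, xi a t) = tau a w - tau a r := by
      rw [tau_sub ha r w]; ring
    rw [e1, e2, hri, hri, hri, hri]; ring
  -- moments from h2, h3
  have hc : (∫ t in p..q, xi a t * Real.cos t) = ∫ t in r..w, xi a t * Real.cos t := by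
    have e1 := prim_sub ha (f := fun t => xi a t * Real.cos t) (xic_cont ha) p q
    have e2 := prim_sub ha (f := fun t => xi a t * Real.cos t) (xic_cont ha) r w
    have hneg : ∀ u : ℝ, (∫ t in (0:ℝ)..u, -(xi a t * Real.cos t)) = -∫ t in (0:ℝ)..u, xi a t * Real.cos t := by
      intro u; rw [intervalIntegral.integral_neg]
    rw [hneg, hneg, hneg, hneg] at h2
    linarith
  have hsin : (∫ t in p..q, xi a t * Real.sin t) = ∫ t in r..w, xi a t * Real.sin t := by
    have e1 := prim_sub ha (f := fun t => xi a t * Real.sin t) (xis_cont ha) p q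
    have e2 := prim_sub ha (f := fun t => xi a t * Real.sin t) (xis_cont ha) r w
    have hneg : ∀ u : ℝ, (∫ t in (0:ℝ)..u, -(xi a t * Real.sin t)) = -∫ t in (0:ℝ)..u, xi a t * Real.sin t := by
      intro u; rw [intervalIntegral.integral_neg]
    rw [hneg, hneg, hneg, hneg] at h3
    linarith
  exact key ha hpq hqr hrw hw hm hc hsin

end Stmt17

theorem statement17 (a : ℝ) (ha : a ∈ Set.Ioo (0:ℝ) 1) (α α' β β' : ℝ)
    (hβ : β ∈ Set.Ioo 0 (tau a π)) (hβ' : β' ∈ Set.Ioo 0 (tau a π))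
    (heq : fcheck a α β = fcheck a α' β') :
    α = α' ∧ β = β' := by
  obtain ⟨hβ0, hβπ⟩ := hβ
  obtain ⟨hβ'0, hβ'π⟩ := hβ'
  have hri : ∀ x, tau a (Function.invFun (tau a) x) = x := fun x => Stmt17.tau_rightInv ha x
  have h1 := congrArg Prod.fst heq
  have h2 := congrArg (fun v : ℝ × ℝ × ℝ => v.2.1) heq
  have h3 := congrArg (fun v : ℝ × ℝ × ℝ => v.2.2) heq
  simp only [fcheck, gamTilde, gam, Prod.smul_fst, Prod.fst_add, Prod.smul_snd, Prod.snd_add,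
    smul_eq_mul, hri] at h1 h2 h3
  have hαα : α = α' := by linarith
  subst hαα
  refine ⟨rfl, ?_⟩
  rcases lt_trichotomy β β' with h | h | h
  · exact absurd (Stmt17.aux ha hβ0 h hβ'π (by linarith) (by linarith)) id
  · exact h
  · exact absurd (Stmt17.aux ha hβ'0 h hβπ (by linarith) (by linarith)) id
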